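/- Let C be a small category with pullbacks, I a small filtered category, F : I ⥤ C a functor, P the colimit of F ⋙ y in Pre(C) with cocone components ι_i : y(F i) ⟶ P. Let Y be an object of C, f : P ⟶ y(Y) a morphism of presheaves with components f_i : F i ⟶ Y, and g : Y ⟶ F i₀ a morphism in C such that f_{i₀} ∘ g = 𝟙_Y. Assume that for every object i of I there is a morphism τ_i : i ⟶ j in I such that the canonical morphism F i ×_{F j} F i ⟶ F i ×_Y F i (from the kernel pair of F(τ_i) to the kernel pair of f_i, induced by the equality f_j ∘ F(τ_i) = f_i) is an isomorphism in C. Then f is an isomorphism of presheaves, with inverse ι_{i₀} ∘ y(g). -/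

import Mathlib

open CategoryTheory CategoryTheory.Limits

universe u

theorem ind_iso_criterion_kernel_pairs {C : Type u} [SmallCategory C] [HasPullbacks C]
    {I : Type u} [SmallCategory I] [IsFiltered I] (F : I ⥤ C) (Y : C)
    (f : colimit (F ⋙ yoneda) ⟶ yoneda.obj Y)
    (fc : ∀ i : I, F.obj i ⟶ Y)
    (hf : ∀ i : I, colimit.ι (F ⋙ yoneda) i ≫ f = yoneda.map (fc i))
    (i₀ : I) (g : Y ⟶ F.obj i₀) (hg : g ≫ fc i₀ = 𝟙 Y)
    (H : ∀ i : I, ∃ (j : I) (τ : i ⟶ j) (w : F.map τ ≫ fc j = 𝟙 (F.obj i) ≫ fc i),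
      IsIso (pullback.map (F.map τ) (F.map τ) (fc i) (fc i)
        (𝟙 (F.obj i)) (𝟙 (F.obj i)) (fc j) w w)) :
    f ≫ (yoneda.map g ≫ colimit.ι (F ⋙ yoneda) i₀) = 𝟙 (colimit (F ⋙ yoneda)) ∧
      (yoneda.map g ≫ colimit.ι (F ⋙ yoneda) i₀) ≫ f = 𝟙 (yoneda.obj Y) ∧
      IsIso f := by
  have key : ∀ {i j : I} (u : i ⟶ j), F.map u ≫ fc j = fc i := by
    intro i j u
    apply yoneda.map_injective
    rw [yoneda.map_comp, ← hf, ← hf, ← colimit.w (F ⋙ yoneda) u, Category.assoc]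
    rfl
  have h1 : (yoneda.map g ≫ colimit.ι (F ⋙ yoneda) i₀) ≫ f = 𝟙 (yoneda.obj Y) := by
    rw [Category.assoc, hf, ← yoneda.map_comp, hg, yoneda.map_id]
  have h2 : f ≫ (yoneda.map g ≫ colimit.ι (F ⋙ yoneda) i₀) = 𝟙 (colimit (F ⋙ yoneda)) := by
    apply colimit.hom_ext
    intro i
    rw [Category.comp_id, ← Category.assoc, hf i]
    obtain ⟨j, τ, w, _⟩ := H i
    set k := IsFiltered.max j i₀ with hk
    have u : j ⟶ k := IsFiltered.leftToMax j i₀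
    have v : i₀ ⟶ k := IsFiltered.rightToMax j i₀
    obtain ⟨l, τ', w', hiso'⟩ := H k
    set a : F.obj i ⟶ F.obj k := F.map τ ≫ F.map u with ha
    set b : F.obj i ⟶ F.obj k := fc i ≫ g ≫ F.map v with hb
    have heq : a ≫ fc k = b ≫ fc k := by
      rw [ha, hb, Category.assoc, key u, w, Category.id_comp,
        Category.assoc, Category.assoc, key v, hg, Category.comp_id]
    set m := pullback.map (F.map τ') (F.map τ') (fc k) (fc k)
      (𝟙 (F.obj k)) (𝟙 (F.obj k)) (fc l) w' w' with hm
    haveI := hiso'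
    set h : F.obj i ⟶ pullback (fc k) (fc k) := pullback.lift a b heq with hh
    have hfst : (h ≫ inv m) ≫ pullback.fst (F.map τ') (F.map τ') = a := by
      have : m ≫ pullback.fst (fc k) (fc k) = pullback.fst (F.map τ') (F.map τ') := by simp [hm, pullback.map]; exact pullback.lift_fst _ _ _
      rw [← this, Category.assoc, IsIso.inv_hom_id_assoc, hh, pullback.lift_fst]
    have hsnd : (h ≫ inv m) ≫ pullback.snd (F.map τ') (F.map τ') = b := by
      have : m ≫ pullback.snd (fc k) (fc k) = pullback.snd (F.map τ') (F.map τ') := by simp [hm, pullback.map]; exact pullback.lift_snd _ _ _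
      rw [← this, Category.assoc, IsIso.inv_hom_id_assoc, hh, pullback.lift_snd]
    have hab : a ≫ F.map τ' = b ≫ F.map τ' := by
      rw [← hfst, ← hsnd]
      simp only [Category.assoc, pullback.condition]
    calc yoneda.map (fc i) ≫ yoneda.map g ≫ colimit.ι (F ⋙ yoneda) i₀
        = yoneda.map (fc i) ≫ yoneda.map g ≫ (F ⋙ yoneda).map (v ≫ τ') ≫
            colimit.ι (F ⋙ yoneda) l := by rw [colimit.w (F ⋙ yoneda) (v ≫ τ')]
      _ = yoneda.map (b ≫ F.map τ') ≫ colimit.ι (F ⋙ yoneda) l := by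
            simp [hb, Functor.comp_map]
      _ = yoneda.map (a ≫ F.map τ') ≫ colimit.ι (F ⋙ yoneda) l := by rw [hab]
      _ = (F ⋙ yoneda).map (τ ≫ u ≫ τ') ≫ colimit.ι (F ⋙ yoneda) l := by
            simp [ha, Functor.comp_map]
      _ = colimit.ι (F ⋙ yoneda) i := colimit.w (F ⋙ yoneda) (τ ≫ u ≫ τ')
  exact ⟨h2, h1, ⟨⟨yoneda.map g ≫ colimit.ι (F ⋙ yoneda) i₀, h2, h1⟩⟩⟩
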